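/- arXiv:1905.01229 — 2 statements merged into one kernel-verified Lean document; each statement's English description precedes it below -/
import Mathlib

section
/- Define g(β) = f(β) − β f'(β), where f(β) = ∑_{k=1}^∞ (k^{k-2}/k!)[β^{1/2}∫₀^β x^{k-3/2}e^{-kx}dx + ∫_β^∞ x^{k-1}e^{-kx}dx]. Then g(β) ≥ (β^{1/2}/2) ∑_{k=1}^∞ (k^{k-2}/k!) ∫₀^β x^{k-3/2} e^{-kx} dx for all β > 0, and hence g(β) → ∞ as β → ∞. -/
open MeasureTheory Real Filter

noncomputable def fkAux (k : ℕ) (β : ℝ) : ℝ :=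
  β ^ ((1:ℝ)/2) * ∫ x in Set.Ioc (0:ℝ) β, x ^ ((k : ℝ) - 3/2) * Real.exp (-(k:ℝ) * x)
    + ∫ x in Set.Ioi β, x ^ ((k : ℝ) - 1) * Real.exp (-(k:ℝ) * x)

noncomputable def fAux (β : ℝ) : ℝ :=
  ∑' k : ℕ, ((k + 1 : ℝ) ^ ((k : ℝ) - 1) / (Nat.factorial (k + 1) : ℝ)) * fkAux (k + 1) β

/-- `f'(β) = (1/2) ∑_{k≥1} (k^{k-2}/k!) β^{-1/2} ∫₀^β x^{k-3/2} e^{-kx} dx`. -/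
noncomputable def fDerivAux (β : ℝ) : ℝ :=
  (1/2) * ∑' k : ℕ, ((k + 1 : ℝ) ^ ((k : ℝ) - 1) / (Nat.factorial (k + 1) : ℝ)) *
    (β ^ (-(1:ℝ)/2) *
      ∫ x in Set.Ioc (0:ℝ) β, x ^ ((k + 1 : ℝ) - 3/2) * Real.exp (-(k + 1 : ℝ) * x))

/-- `g β = f β − β f'(β)`. -/
noncomputable def gAux (β : ℝ) : ℝ := fAux β - β * fDerivAux β

set_option maxHeartbeats 1000000

open Set in
noncomputable def aK (k : ℕ) : ℝ := (k + 1 : ℝ) ^ ((k : ℝ) - 1) / (Nat.factorial (k + 1) : ℝ)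
noncomputable def iI (k : ℕ) (β : ℝ) : ℝ :=
  ∫ x in Set.Ioc (0:ℝ) β, x ^ ((k + 1 : ℝ) - 3/2) * Real.exp (-(k + 1 : ℝ) * x)
noncomputable def jJ (k : ℕ) (β : ℝ) : ℝ :=
  ∫ x in Set.Ioi β, x ^ ((k + 1 : ℝ) - 1) * Real.exp (-(k + 1 : ℝ) * x)

lemma xexp_le {x : ℝ} : x * Real.exp (-x) ≤ Real.exp (-1) := by
  have h := Real.add_one_le_exp (x - 1)
  have h2 : x ≤ Real.exp (x - 1) := by linarith
  calc x * Real.exp (-x) ≤ Real.exp (x-1) * Real.exp (-x) := by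
        apply mul_le_mul_of_nonneg_right h2 (Real.exp_nonneg _)
    _ = Real.exp (-1) := by rw [← Real.exp_add]; ring_nf

lemma ptI {k : ℕ} {x : ℝ} (hx : 0 < x) :
    x ^ ((k + 1 : ℝ) - 3/2) * Real.exp (-(k + 1 : ℝ) * x)
      ≤ Real.exp (-1) ^ k * x ^ (-(1:ℝ)/2) := by
  have h1 : x ^ ((k + 1 : ℝ) - 3/2) = x ^ (-(1:ℝ)/2) * x ^ k := by
    rw [← Real.rpow_natCast x k, ← Real.rpow_add hx]; congr 1; ring
  have h2 : Real.exp (-(k + 1 : ℝ) * x) = Real.exp (-x) ^ k * Real.exp (-x) := by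
    rw [← Real.exp_nat_mul, ← Real.exp_add]; ring_nf
  rw [h1, h2]
  have hxe : (x * Real.exp (-x)) ^ k ≤ Real.exp (-1) ^ k :=
    pow_le_pow_left₀ (by positivity) xexp_le k
  calc x ^ (-(1:ℝ)/2) * x ^ k * (Real.exp (-x) ^ k * Real.exp (-x))
      = (x * Real.exp (-x)) ^ k * (x ^ (-(1:ℝ)/2) * Real.exp (-x)) := by ring
    _ ≤ Real.exp (-1) ^ k * (x ^ (-(1:ℝ)/2) * 1) := by
        apply mul_le_mul hxe ?_ (by positivity) (by positivity)
        exact mul_le_mul_of_nonneg_left (Real.exp_le_one_iff.mpr (by linarith)) (by positivity)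
    _ = Real.exp (-1) ^ k * x ^ (-(1:ℝ)/2) := by ring

lemma ptJ {k : ℕ} {x : ℝ} (hx : 0 < x) :
    x ^ ((k + 1 : ℝ) - 1) * Real.exp (-(k + 1 : ℝ) * x)
      ≤ Real.exp (-1) ^ k * Real.exp (-x) := by
  have h1 : x ^ ((k + 1 : ℝ) - 1) = x ^ k := by
    rw [← Real.rpow_natCast x k]; congr 1; ring
  have h2 : Real.exp (-(k + 1 : ℝ) * x) = Real.exp (-x) ^ k * Real.exp (-x) := by
    rw [← Real.exp_nat_mul, ← Real.exp_add]; ring_nf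
  rw [h1, h2, ← mul_assoc, ← mul_pow]
  exact mul_le_mul_of_nonneg_right (pow_le_pow_left₀ (by positivity) xexp_le k)
    (Real.exp_nonneg _)

lemma intRpow {β : ℝ} (hβ : 0 < β) :
    IntegrableOn (fun x : ℝ => x ^ (-(1:ℝ)/2)) (Set.Ioc 0 β) := by
  rw [← intervalIntegrable_iff_integrableOn_Ioc_of_le hβ.le]
  exact intervalIntegral.intervalIntegrable_rpow' (by norm_num)

lemma measH (c d : ℝ) : Measurable (fun x : ℝ => x ^ c * Real.exp (d * x)) :=
  (by measurability : Measurable fun x : ℝ => x ^ c).mul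
    (Real.measurable_exp.comp (measurable_id.const_mul d))

lemma measI (k : ℕ) : Measurable (fun x : ℝ =>
    x ^ ((k + 1 : ℝ) - 3/2) * Real.exp (-(k + 1 : ℝ) * x)) := by
  simpa [neg_mul] using measH ((k + 1 : ℝ) - 3/2) (-(k+1))

lemma intI (k : ℕ) {β : ℝ} (hβ : 0 < β) :
    IntegrableOn (fun x : ℝ => x ^ ((k + 1 : ℝ) - 3/2) * Real.exp (-(k + 1 : ℝ) * x))
      (Set.Ioc 0 β) := by
  apply Integrable.mono' ((intRpow hβ).const_mul (Real.exp (-1) ^ k))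
    (measI k).aestronglyMeasurable
  filter_upwards [ae_restrict_mem measurableSet_Ioc] with x hx
  rw [Real.norm_eq_abs, abs_of_nonneg
    (mul_nonneg (Real.rpow_nonneg hx.1.le _) (Real.exp_nonneg _))]
  exact ptI hx.1

lemma intJ (k : ℕ) {β : ℝ} (hβ : 0 < β) :
    IntegrableOn (fun x : ℝ => x ^ ((k + 1 : ℝ) - 1) * Real.exp (-(k + 1 : ℝ) * x))
      (Set.Ioi β) := by
  have hexp : IntegrableOn (fun x : ℝ => Real.exp (-1) ^ k * Real.exp (-x)) (Set.Ioi β) := by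
    have := (exp_neg_integrableOn_Ioi β (by norm_num : (0:ℝ) < 1)).const_mul
      (Real.exp (-1) ^ k)
    simpa [IntegrableOn] using this
  apply Integrable.mono' hexp
    (Measurable.aestronglyMeasurable
      (by simpa [neg_mul] using measH ((k + 1 : ℝ) - 1) (-(k+1))))
  filter_upwards [ae_restrict_mem measurableSet_Ioi] with x hx
  have hx0 : 0 < x := hβ.trans hx
  rw [Real.norm_eq_abs, abs_of_nonneg
    (mul_nonneg (Real.rpow_nonneg hx0.le _) (Real.exp_nonneg _))]
  exact ptJ hx0

lemma iI_nonneg (k : ℕ) (β : ℝ) : 0 ≤ iI k β := by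
  apply setIntegral_nonneg measurableSet_Ioc
  intro x hx
  exact mul_nonneg (Real.rpow_nonneg hx.1.le _) (Real.exp_nonneg _)

lemma jJ_nonneg (k : ℕ) {β : ℝ} (hβ : 0 < β) : 0 ≤ jJ k β := by
  apply setIntegral_nonneg measurableSet_Ioi
  intro x hx
  have h0 : 0 < x := hβ.trans hx
  exact mul_nonneg (Real.rpow_nonneg h0.le _) (Real.exp_nonneg _)

lemma rpow_int_val {β : ℝ} (hβ : 0 < β) :
    ∫ x in Set.Ioc (0:ℝ) β, x ^ (-(1:ℝ)/2) = 2 * β ^ ((1:ℝ)/2) := by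
  rw [← intervalIntegral.integral_of_le hβ.le,
    integral_rpow (Or.inl (by norm_num : (-1:ℝ) < -1/2))]
  rw [Real.zero_rpow (by norm_num : (-(1:ℝ)/2 + 1) ≠ 0)]
  norm_num
  ring

lemma iI_le (k : ℕ) {β : ℝ} (hβ : 0 < β) :
    iI k β ≤ Real.exp (-1) ^ k * (2 * β ^ ((1:ℝ)/2)) := by
  have h : iI k β ≤ ∫ x in Set.Ioc (0:ℝ) β, Real.exp (-1) ^ k * x ^ (-(1:ℝ)/2) := by
    apply setIntegral_mono_on (intI k hβ) ((intRpow hβ).const_mul _) measurableSet_Ioc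
    intro x hx; exact ptI hx.1
  rw [integral_const_mul, rpow_int_val hβ] at h
  exact h

lemma jJ_le (k : ℕ) {β : ℝ} (hβ : 0 < β) : jJ k β ≤ Real.exp (-1) ^ k := by
  have hexp : IntegrableOn (fun x : ℝ => Real.exp (-1) ^ k * Real.exp (-x)) (Set.Ioi β) := by
    simpa [IntegrableOn] using (exp_neg_integrableOn_Ioi β (by norm_num : (0:ℝ) < 1)).const_mul
      (Real.exp (-1) ^ k)
  have h : jJ k β ≤ ∫ x in Set.Ioi β, Real.exp (-1) ^ k * Real.exp (-x) := by
    apply setIntegral_mono_on (intJ k hβ) hexp measurableSet_Ioi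
    intro x hx; exact ptJ (hβ.trans hx)
  rw [integral_const_mul] at h
  have hv : ∫ x in Set.Ioi β, Real.exp (-x) = Real.exp (-β) := by
    simpa using integral_exp_neg_Ioi β
  rw [hv] at h
  calc jJ k β ≤ Real.exp (-1) ^ k * Real.exp (-β) := h
    _ ≤ Real.exp (-1) ^ k * 1 := by
        apply mul_le_mul_of_nonneg_left (Real.exp_le_one_iff.mpr (by linarith)) (by positivity)
    _ = Real.exp (-1) ^ k := mul_one _

lemma aK_nonneg (k : ℕ) : 0 ≤ aK k := by
  unfold aK; positivity

lemma aK_le (k : ℕ) : aK k ≤ Real.exp 1 ^ (k + 1) / ((k:ℝ) + 1) ^ 2 := by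
  have hk : (0:ℝ) < (k:ℝ) + 1 := by positivity
  have h1 : (k + 1 : ℝ) ^ ((k : ℝ) - 1) = ((k:ℝ) + 1) ^ (k + 1) / ((k:ℝ) + 1) ^ 2 := by
    rw [show ((k:ℝ) - 1) = ((k:ℝ) + 1) - 2 by ring, Real.rpow_sub hk,
      show (2:ℝ) = ((2:ℕ):ℝ) by norm_num, Real.rpow_natCast,
      show ((k:ℝ) + 1) = (((k+1:ℕ)):ℝ) by push_cast; ring, Real.rpow_natCast]
  have h2 : ((k:ℝ) + 1) ^ (k + 1) / (Nat.factorial (k + 1) : ℝ) ≤ Real.exp ((k:ℝ) + 1) := by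
    have := Real.sum_le_exp_of_nonneg (x := (k:ℝ) + 1) (by positivity) (k + 2)
    refine le_trans ?_ this
    have : ((k:ℝ) + 1) ^ (k+1) / (Nat.factorial (k+1) : ℝ) =
        (fun i => ((k:ℝ) + 1) ^ i / (Nat.factorial i : ℝ)) (k+1) := rfl
    rw [this]
    apply Finset.single_le_sum (f := fun i => ((k:ℝ) + 1) ^ i / (Nat.factorial i : ℝ))
      (fun i _ => by positivity) (Finset.self_mem_range_succ (k+1))
  have h3 : Real.exp ((k:ℝ) + 1) = Real.exp 1 ^ (k + 1) := by
    rw [← Real.exp_nat_mul]; push_cast; ring_nf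
  unfold aK
  rw [h1, div_div,
    show ((k:ℝ)+1)^2 * (Nat.factorial (k+1):ℝ) = (Nat.factorial (k+1):ℝ) * ((k:ℝ)+1)^2
      from mul_comm _ _, ← div_div]
  gcongr
  rw [← h3]; exact h2

lemma summable_bound (C : ℝ) : Summable (fun k : ℕ => C / ((k:ℝ) + 1) ^ 2) := by
  have h : Summable (fun n : ℕ => 1 / ((n:ℝ)) ^ 2) :=
    Real.summable_one_div_nat_pow.mpr one_lt_two
  have h2 := (_root_.summable_nat_add_iff (f := fun n : ℕ => 1 / ((n:ℝ)) ^ 2) 1).mpr h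
  have h3 : Summable (fun k : ℕ => 1 / ((k:ℝ) + 1) ^ 2) := by
    apply h2.congr; intro k; push_cast; ring
  apply (h3.mul_left C).congr; intro k; ring

lemma aKexp (k : ℕ) : aK k * Real.exp (-1) ^ k ≤ Real.exp 1 / ((k:ℝ) + 1) ^ 2 := by
  have key : Real.exp 1 ^ (k+1) * Real.exp (-1) ^ k = Real.exp 1 := by
    rw [pow_succ, mul_comm (Real.exp 1 ^ k), mul_assoc, ← mul_pow, ← Real.exp_add]
    norm_num
  calc aK k * Real.exp (-1) ^ k
      ≤ (Real.exp 1 ^ (k+1) / ((k:ℝ)+1)^2) * Real.exp (-1) ^ k :=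
        mul_le_mul_of_nonneg_right (aK_le k) (by positivity)
    _ = (Real.exp 1 ^ (k+1) * Real.exp (-1) ^ k) / ((k:ℝ)+1)^2 := by ring
    _ = Real.exp 1 / ((k:ℝ)+1)^2 := by rw [key]

lemma termI_le (k : ℕ) {β : ℝ} (hβ : 0 < β) :
    aK k * iI k β ≤ (Real.exp 1 * (2 * β ^ ((1:ℝ)/2))) / ((k:ℝ)+1)^2 := by
  calc aK k * iI k β ≤ aK k * (Real.exp (-1) ^ k * (2 * β ^ ((1:ℝ)/2))) :=
        mul_le_mul_of_nonneg_left (iI_le k hβ) (aK_nonneg k)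
    _ = (aK k * Real.exp (-1) ^ k) * (2 * β ^ ((1:ℝ)/2)) := by ring
    _ ≤ (Real.exp 1 / ((k:ℝ)+1)^2) * (2 * β ^ ((1:ℝ)/2)) :=
        mul_le_mul_of_nonneg_right (aKexp k) (by positivity)
    _ = (Real.exp 1 * (2 * β ^ ((1:ℝ)/2))) / ((k:ℝ)+1)^2 := by ring

lemma termJ_le (k : ℕ) {β : ℝ} (hβ : 0 < β) :
    aK k * jJ k β ≤ Real.exp 1 / ((k:ℝ)+1)^2 := by
  calc aK k * jJ k β ≤ aK k * Real.exp (-1) ^ k :=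
        mul_le_mul_of_nonneg_left (jJ_le k hβ) (aK_nonneg k)
    _ ≤ Real.exp 1 / ((k:ℝ)+1)^2 := aKexp k

lemma hSI {β : ℝ} (hβ : 0 < β) : Summable (fun k : ℕ => aK k * iI k β) :=
  Summable.of_nonneg_of_le (fun k => mul_nonneg (aK_nonneg k) (iI_nonneg k β))
    (fun k => termI_le k hβ) (summable_bound _)

lemma hSJ {β : ℝ} (hβ : 0 < β) : Summable (fun k : ℕ => aK k * jJ k β) :=
  Summable.of_nonneg_of_le (fun k => mul_nonneg (aK_nonneg k) (jJ_nonneg k hβ))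
    (fun k => termJ_le k hβ) (summable_bound _)

lemma fk_eq (k : ℕ) {β : ℝ} (hβ : 0 < β) :
    fkAux (k+1) β = β ^ ((1:ℝ)/2) * (iI k β + β * jJ k β) := by
  have hconst : IntegrableOn (fun _ : ℝ => jJ k β) (Set.Ioc (0:ℝ) β) :=
    integrableOn_const measure_Ioc_lt_top.ne
  have h1 : fkAux (k+1) β = β ^ ((1:ℝ)/2) * (∫ x in Set.Ioc (0:ℝ) β,
      (x ^ ((k+1:ℝ) - 3/2) * Real.exp (-(k+1:ℝ) * x) + jJ k β)) := by
    simp only [fkAux, jJ, Nat.cast_add, Nat.cast_one]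
  rw [h1, integral_add (intI k hβ) hconst, setIntegral_const, Real.volume_real_Ioc_of_le hβ.le,
    smul_eq_mul]
  unfold iI
  ring

lemma hSfk {β : ℝ} (hβ : 0 < β) : Summable (fun k : ℕ => aK k * fkAux (k+1) β) := by
  apply (((hSI hβ).mul_left (β ^ ((1:ℝ)/2))).add
    ((hSJ hβ).mul_left (β ^ ((1:ℝ)/2) * β))).congr
  intro k
  rw [fk_eq k hβ]; ring

lemma keyIneq {β : ℝ} (hβ : 0 < β) :
    gAux β ≥ (β ^ ((1:ℝ)/2) / 2) * ∑' k, aK k * iI k β := by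
  have hS : Summable (fun k : ℕ => aK k * iI k β) := hSI hβ
  have hfD : fDerivAux β = (1/2) * (β ^ (-(1:ℝ)/2) * ∑' k, aK k * iI k β) := by
    have hterm : (fun k : ℕ => ((k + 1 : ℝ) ^ ((k : ℝ) - 1) / (Nat.factorial (k + 1) : ℝ)) *
        (β ^ (-(1:ℝ)/2) *
          ∫ x in Set.Ioc (0:ℝ) β, x ^ ((k + 1 : ℝ) - 3/2) * Real.exp (-(k + 1 : ℝ) * x)))
        = fun k => β ^ (-(1:ℝ)/2) * (aK k * iI k β) := by
      funext k; simp only [aK, iI]; ring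
    unfold fDerivAux
    rw [hterm, tsum_mul_left]
  have hβhalf : β * β ^ (-(1:ℝ)/2) = β ^ ((1:ℝ)/2) := by
    nth_rewrite 1 [show β = β ^ (1:ℝ) from (Real.rpow_one β).symm]
    rw [← Real.rpow_add hβ]; norm_num
  have hfA : β ^ ((1:ℝ)/2) * (∑' k, aK k * iI k β) ≤ fAux β := by
    rw [← tsum_mul_left]
    unfold fAux
    apply Summable.tsum_le_tsum _ (hS.mul_left _) (hSfk hβ)
    intro k
    show β ^ ((1:ℝ)/2) * (aK k * iI k β) ≤ aK k * fkAux (k+1) β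
    rw [fk_eq k hβ]
    have h1 : 0 ≤ aK k * jJ k β := mul_nonneg (aK_nonneg k) (jJ_nonneg k hβ)
    have h2 : 0 ≤ β ^ ((1:ℝ)/2) := Real.rpow_nonneg hβ.le _
    have h3 : aK k * (β ^ ((1:ℝ)/2) * (iI k β + β * jJ k β))
        = β ^ ((1:ℝ)/2) * (aK k * iI k β) + β ^ ((1:ℝ)/2) * (β * (aK k * jJ k β)) := by
      ring
    rw [h3]
    exact le_add_of_nonneg_right (mul_nonneg h2 (mul_nonneg hβ.le h1))
  unfold gAux
  rw [hfD]
  have hmul : β * ((1/2) * (β ^ (-(1:ℝ)/2) * ∑' k, aK k * iI k β))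
      = (β ^ ((1:ℝ)/2) / 2) * ∑' k, aK k * iI k β := by
    rw [show β * ((1/2) * (β ^ (-(1:ℝ)/2) * ∑' k, aK k * iI k β))
      = (β * β ^ (-(1:ℝ)/2)) * (∑' k, aK k * iI k β) / 2 from by ring, hβhalf]
    ring
  rw [hmul]
  linarith

open Set in
theorem stmt_10 :
    (∀ β : ℝ, 0 < β →
      gAux β ≥ (β ^ ((1:ℝ)/2) / 2) *
        ∑' k : ℕ, ((k + 1 : ℝ) ^ ((k : ℝ) - 1) / (Nat.factorial (k + 1) : ℝ)) *
          ∫ x in Set.Ioc (0:ℝ) β, x ^ ((k + 1 : ℝ) - 3/2) * Real.exp (-(k + 1 : ℝ) * x)) ∧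
    Filter.Tendsto gAux Filter.atTop Filter.atTop := by
  constructor
  · intro β hβ
    exact keyIneq hβ
  · have ev : ∀ᶠ β in atTop, Real.exp (-1) / 2 * β ^ ((1:ℝ)/2) ≤ gAux β := by
      filter_upwards [eventually_ge_atTop (1:ℝ)] with β hβ1
      have hβ : (0:ℝ) < β := lt_of_lt_of_le one_pos hβ1
      have hS := hSI hβ
      have haK0 : aK 0 = 1 := by simp [aK]
      have hc : Real.exp (-1) ≤ iI 0 1 := by
        have hb : ∀ x ∈ Set.Ioc (0:ℝ) 1, Real.exp (-1)
            ≤ x ^ ((((0:ℕ):ℝ) + 1) - 3/2) * Real.exp (-(((0:ℕ):ℝ) + 1) * x) := by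
          intro x hx
          have h1 : (1:ℝ) ≤ x ^ ((((0:ℕ):ℝ) + 1) - 3/2) := by
            apply Real.one_le_rpow_of_pos_of_le_one_of_nonpos hx.1 hx.2
            norm_num
          have h2 : Real.exp (-1) ≤ Real.exp (-(((0:ℕ):ℝ) + 1) * x) := by
            apply Real.exp_le_exp.mpr
            have := hx.2
            push_cast
            linarith
          calc Real.exp (-1) = 1 * Real.exp (-1) := (one_mul _).symm
            _ ≤ x ^ ((((0:ℕ):ℝ) + 1) - 3/2) * Real.exp (-(((0:ℕ):ℝ) + 1) * x) :=
              mul_le_mul h1 h2 (Real.exp_pos _).le (le_trans zero_le_one h1)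
        have hcv : (∫ _x in Set.Ioc (0:ℝ) 1, Real.exp (-1)) = Real.exp (-1) := by
          rw [setIntegral_const, Real.volume_real_Ioc_of_le zero_le_one]
          norm_num
        calc Real.exp (-1) = ∫ _x in Set.Ioc (0:ℝ) 1, Real.exp (-1) := hcv.symm
          _ ≤ iI 0 1 := by
            unfold iI
            exact setIntegral_mono_on (integrableOn_const measure_Ioc_lt_top.ne)
              (intI 0 one_pos) measurableSet_Ioc hb
      have hii : iI 0 1 ≤ iI 0 β := by
        unfold iI
        apply setIntegral_mono_set (intI 0 hβ) ?_ ((Set.Ioc_subset_Ioc_right hβ1).eventuallyLE)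
        filter_upwards [ae_restrict_mem measurableSet_Ioc] with x hx
        exact mul_nonneg (Real.rpow_nonneg hx.1.le _) (Real.exp_nonneg _)
      have hle : Real.exp (-1) ≤ ∑' k, aK k * iI k β := by
        have h0 := Summable.le_tsum hS 0 (fun j _ => mul_nonneg (aK_nonneg j) (iI_nonneg j β))
        rw [haK0, one_mul] at h0
        linarith
      have h := keyIneq hβ
      have hpos : 0 ≤ β ^ ((1:ℝ)/2) / 2 := by positivity
      calc Real.exp (-1) / 2 * β ^ ((1:ℝ)/2)
          = (β ^ ((1:ℝ)/2) / 2) * Real.exp (-1) := by ring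
        _ ≤ (β ^ ((1:ℝ)/2) / 2) * ∑' k, aK k * iI k β := mul_le_mul_of_nonneg_left hle hpos
        _ ≤ gAux β := h
    have hbase : Tendsto (fun β : ℝ => Real.exp (-1) / 2 * β ^ ((1:ℝ)/2)) atTop atTop :=
      (tendsto_rpow_atTop (by norm_num : (0:ℝ) < 1/2)).const_mul_atTop (by positivity)
    exact tendsto_atTop_mono' atTop ev hbase
end

section
/- For n ≥ 2 and q ∈ [1000 log n / n, 1], the expected number of connected components of the Erdős–Rényi random graph G(n,q) satisfies 1 ≤ E[κ(G(n,q))] ≤ 1 + n ∑_{k=1}^{⌊n/2⌋} C(n,k) k^{k-2} q^{k-1} (1−q)^{k(n−k)}, and this upper bound is at most 1 + n³ e · n^{−499}/(1000 log n) for n sufficiently large. -/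
open MeasureTheory

/-- The set of potential edges of the complete graph on `Fin n`. -/
abbrev EdgeIdx (n : ℕ) := {e : Sym2 (Fin n) // ¬ e.IsDiag}

/-- The product Bernoulli(q) measure on edge indicator configurations:
the distribution of `G(n,q)`. -/
noncomputable def gnpMeasure (n : ℕ) (q : ℝ) : Measure (EdgeIdx n → Bool) :=
  Measure.pi fun _ =>
    (PMF.bernoulli (min (Real.toNNReal q) 1) (min_le_right _ _)).toMeasure

/-- The random graph associated with an edge configuration. -/
def gnpGraph {n : ℕ} (ω : EdgeIdx n → Bool) : SimpleGraph (Fin n) :=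
  SimpleGraph.fromEdgeSet {s : Sym2 (Fin n) | ∃ h : ¬ s.IsDiag, ω ⟨s, h⟩ = true}

/-- The number of connected components. -/
noncomputable def kappa {n : ℕ} (ω : EdgeIdx n → Bool) : ℕ :=
  Nat.card (gnpGraph ω).ConnectedComponent

/-- Expected number of connected components of `G(n,q)`. -/
noncomputable def expKappa (n : ℕ) (q : ℝ) : ℝ :=
  ∫ ω, (kappa ω : ℝ) ∂(gnpMeasure n q)

/-- The first-moment upper bound on the expected number of components. -/
noncomputable def compBound (n : ℕ) (q : ℝ) : ℝ :=
  1 + n * ∑ k ∈ Finset.Icc 1 (n / 2),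
    (n.choose k : ℝ) * (k : ℝ) ^ (k - 2) * q ^ (k - 1) * (1 - q) ^ (k * (n - k))

namespace Stmt19
open Finset

instance (n : ℕ) : MeasurableSingletonClass (EdgeIdx n → Bool) := by
  refine ⟨fun ω => ?_⟩
  have h : {ω} = Set.univ.pi (fun e => {ω e}) := by
    ext x
    simp [Set.mem_pi, funext_iff]
  rw [h]
  exact MeasurableSet.univ_pi fun i => MeasurableSet.singleton _

lemma measurableSet_all {n : ℕ} (s : Set (EdgeIdx n → Bool)) : MeasurableSet s :=
  (Set.to_countable s).measurableSet

instance (n : ℕ) (q : ℝ) : IsProbabilityMeasure (gnpMeasure n q) := by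
  unfold gnpMeasure; infer_instance

/-- The master event -/
def Ev {n : ℕ} (A B : Finset (EdgeIdx n)) : Set (EdgeIdx n → Bool) :=
  {ω | (∀ e ∈ A, ω e = true) ∧ (∀ e ∈ B, ω e = false)}

lemma gnp_cylinder (n : ℕ) (q : ℝ) (hq0 : 0 ≤ q) (hq1 : q ≤ 1)
    (A B : Finset (EdgeIdx n)) (hAB : Disjoint A B) :
    gnpMeasure n q (Ev A B)
      = (ENNReal.ofReal q) ^ A.card * (ENNReal.ofReal (1 - q)) ^ B.card := by
  classical
  set p0 : NNReal := min (Real.toNNReal q) 1 with hp0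
  set p : ENNReal := (p0 : ENNReal) with hp
  have hpq : p = ENNReal.ofReal q := by
    show ((min (Real.toNNReal q) 1 : NNReal) : ENNReal) = ENNReal.ofReal q
    rw [min_eq_left (Real.toNNReal_le_one.2 hq1)]; rfl
  have h1p : 1 - p = ENNReal.ofReal (1 - q) := by
    rw [hpq, ENNReal.ofReal_sub _ hq0, ENNReal.ofReal_one]
  have hEv : Ev A B = Set.univ.pi
      (fun e => if e ∈ A then {true} else if e ∈ B then ({false} : Set Bool) else Set.univ) := by
    ext ω
    simp only [Ev, Set.mem_setOf_eq, Set.mem_pi, Set.mem_univ, forall_true_left]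
    constructor
    · rintro ⟨h1, h2⟩ e
      by_cases hA : e ∈ A
      · simp [hA, h1 e hA]
      · by_cases hB : e ∈ B
        · simp [hA, hB, h2 e hB]
        · simp [hA, hB]
    · intro h
      constructor
      · intro e he
        have := h e
        simp [he] at this
        exact this
      · intro e he
        have := h e
        have hA : e ∉ A := fun h' => (Finset.disjoint_left.1 hAB h') he
        simp [hA, he] at this
        exact this
  rw [hEv]
  unfold gnpMeasure
  rw [Measure.pi_pi]
  set μb := (PMF.bernoulli p0 (min_le_right _ _)).toMeasure with hμb
  have hT : μb {true} = p := by
    rw [hμb, PMF.toMeasure_apply_singleton _ _ (MeasurableSet.singleton _),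
      PMF.bernoulli_apply]
    rfl
  have hF : μb {false} = 1 - p := by
    rw [hμb, PMF.toMeasure_apply_singleton _ _ (MeasurableSet.singleton _),
      PMF.bernoulli_apply]
    rfl
  have hU : μb Set.univ = 1 := measure_univ
  have hfac : ∀ e : EdgeIdx n,
      μb (if e ∈ A then {true} else if e ∈ B then ({false} : Set Bool) else Set.univ)
        = if e ∈ A then p else if e ∈ B then 1 - p else 1 := by
    intro e
    by_cases hA : e ∈ A
    · simp [hA, hT]
    · by_cases hB : e ∈ B
      · simp [hA, hB, hF]
      · rw [if_neg hA, if_neg hB, if_neg hA, if_neg hB]; exact hU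
  rw [Finset.prod_congr rfl (fun e _ => hfac e)]
  rw [← Finset.prod_filter_mul_prod_filter_not Finset.univ (· ∈ A)]
  have e1 : Finset.univ.filter (· ∈ A) = A := by
    ext e; simp
  have e2 : ∀ e ∈ A, (if e ∈ A then p else if e ∈ B then 1 - p else 1) = p := by
    intro e he; simp [he]
  rw [e1, Finset.prod_congr rfl e2, Finset.prod_const]
  have e3 : ∀ e ∈ Finset.univ.filter (¬ · ∈ A),
      (if e ∈ A then p else if e ∈ B then 1 - p else 1) = if e ∈ B then 1 - p else 1 := by
    intro e he
    simp only [Finset.mem_filter] at he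
    simp [he.2]
  rw [Finset.prod_congr rfl e3,
    ← Finset.prod_filter_mul_prod_filter_not (Finset.univ.filter (¬ · ∈ A)) (· ∈ B)]
  have e5 : (Finset.univ.filter (¬ · ∈ A)).filter (· ∈ B) = B := by
    ext e
    simp only [Finset.mem_filter, Finset.mem_univ, true_and]
    exact ⟨fun h => h.2, fun h => ⟨Finset.disjoint_right.1 hAB h, h⟩⟩
  have e6 : ∀ e ∈ (Finset.univ.filter (¬ · ∈ A)).filter (· ∈ B),
      (if e ∈ B then 1 - p else 1) = 1 - p := by
    intro e he
    simp only [Finset.mem_filter] at he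
    simp [he.2]
  have e7 : ∀ e ∈ (Finset.univ.filter (¬ · ∈ A)).filter (¬ · ∈ B),
      (if e ∈ B then 1 - p else 1) = 1 := by
    intro e he
    simp only [Finset.mem_filter] at he
    simp [he.2]
  rw [Finset.prod_congr rfl e6, e5, Finset.prod_const,
    Finset.prod_congr rfl e7, Finset.prod_const_one, h1p, hpq, mul_one]


/-- Crossing edges between `S` and its complement. -/
def crossE {n : ℕ} (S : Finset (Fin n)) : Finset (EdgeIdx n) :=
  Finset.univ.filter (fun e => ∃ a ∈ S, ∃ b ∉ S, e.1 = s(a, b))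

lemma card_crossE {n : ℕ} (S : Finset (Fin n)) :
    (crossE S).card = S.card * (n - S.card) := by
  classical
  have hval : ((crossE S).image Subtype.val).card = (crossE S).card :=
    Finset.card_image_of_injective _ Subtype.val_injective
  have him : (crossE S).image Subtype.val
      = (S ×ˢ Sᶜ).image (fun p => s(p.1, p.2)) := by
    ext z
    simp only [Finset.mem_image, crossE, Finset.mem_filter, Finset.mem_univ, true_and,
      Finset.mem_product, Finset.mem_compl]
    constructor
    · rintro ⟨e, ⟨a, ha, b, hb, hab⟩, rfl⟩
      exact ⟨(a, b), ⟨ha, hb⟩, hab.symm⟩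
    · rintro ⟨⟨a, b⟩, ⟨ha, hb⟩, rfl⟩
      have hne : a ≠ b := fun h => hb (h ▸ ha)
      exact ⟨⟨s(a, b), by simp [Sym2.mk_isDiag_iff, hne]⟩, ⟨a, ha, b, hb, rfl⟩, rfl⟩
  have hinj : Set.InjOn (fun p : Fin n × Fin n => s(p.1, p.2)) ↑(S ×ˢ Sᶜ) := by
    rintro ⟨a, b⟩ hab ⟨c, d⟩ hcd h
    simp only [Finset.coe_product, Set.mem_prod, Finset.mem_coe, Finset.mem_compl] at hab hcd
    simp only at h
    rcases Sym2.eq_iff.1 h with ⟨rfl, rfl⟩ | ⟨h1, h2⟩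
    · rfl
    · exact absurd (h1 ▸ hab.1) hcd.2
  rw [← hval, him, Finset.card_image_of_injOn hinj, Finset.card_product,
    Finset.card_compl, Fintype.card_fin]

def compEvent (n : ℕ) (S : Finset (Fin n)) : Set (EdgeIdx n → Bool) :=
  {ω | ∃ c : (gnpGraph ω).ConnectedComponent, ↑S = c.supp}

lemma gnpGraph_adj {n : ℕ} (ω : EdgeIdx n → Bool) (a b : Fin n) :
    (gnpGraph ω).Adj a b ↔
      (∃ h : ¬ (s(a, b) : Sym2 (Fin n)).IsDiag, ω ⟨s(a, b), h⟩ = true) ∧ a ≠ b := by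
  simp [gnpGraph, SimpleGraph.fromEdgeSet_adj]

lemma exists_adj_dist_lt {V : Type*} (G : SimpleGraph V) {v r : V}
    (h : G.Reachable v r) (hne : v ≠ r) :
    ∃ u, G.Adj v u ∧ G.dist u r < G.dist v r := by
  obtain ⟨p, hp⟩ := h.exists_walk_length_eq_dist
  cases p with
  | nil => exact absurd rfl hne
  | @cons _ u _ ha q =>
    refine ⟨u, ha, ?_⟩
    have h1 : G.dist u r ≤ q.length := SimpleGraph.dist_le q
    rw [SimpleGraph.Walk.length_cons] at hp
    omega

def treeE {n : ℕ} (S : Finset (Fin n)) (r : Fin n)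
    (f : {x // x ∈ S.erase r} → {x // x ∈ S}) : Finset (EdgeIdx n) :=
  Finset.univ.filter (fun e => ∃ v : {x // x ∈ S.erase r}, e.1 = s((v : Fin n), ((f v) : Fin n)))

lemma card_treeE {n : ℕ} (S : Finset (Fin n)) (r : Fin n) (hr : r ∈ S)
    (f : {x // x ∈ S.erase r} → {x // x ∈ S})
    (hne : ∀ v : {x // x ∈ S.erase r}, (v : Fin n) ≠ ((f v) : Fin n))
    (hinj : Function.Injective
      (fun v : {x // x ∈ S.erase r} => s((v : Fin n), ((f v) : Fin n)))) :
    (treeE S r f).card = S.card - 1 := by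
  classical
  have hval : ((treeE S r f).image Subtype.val).card = (treeE S r f).card :=
    Finset.card_image_of_injective _ Subtype.val_injective
  have him : (treeE S r f).image Subtype.val
      = Finset.univ.image (fun v : {x // x ∈ S.erase r} => s((v : Fin n), ((f v) : Fin n))) := by
    ext z
    simp only [Finset.mem_image, treeE, Finset.mem_filter, Finset.mem_univ, true_and]
    constructor
    · rintro ⟨e, ⟨v, hv⟩, rfl⟩
      exact ⟨v, hv.symm⟩
    · rintro ⟨v, rfl⟩
      refine ⟨⟨s((v : Fin n), ((f v) : Fin n)), by simp [Sym2.mk_isDiag_iff, hne v]⟩,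
        ⟨v, rfl⟩, rfl⟩
  rw [← hval, him, Finset.card_image_of_injective _ hinj, Finset.card_univ,
    Fintype.card_coe, Finset.card_erase_of_mem hr]

lemma treeE_disjoint_crossE {n : ℕ} (S : Finset (Fin n)) (r : Fin n)
    (f : {x // x ∈ S.erase r} → {x // x ∈ S}) :
    Disjoint (treeE S r f) (crossE S) := by
  classical
  rw [Finset.disjoint_left]
  rintro e he1 he2
  simp only [treeE, crossE, Finset.mem_filter, Finset.mem_univ, true_and] at he1 he2
  obtain ⟨v, hv⟩ := he1
  obtain ⟨a, ha, b, hb, hab⟩ := he2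
  rw [hv] at hab
  have hvS : (v : Fin n) ∈ S := Finset.mem_of_mem_erase v.2
  have hfS : ((f v) : Fin n) ∈ S := (f v).2
  rcases Sym2.eq_iff.1 hab with ⟨h1, h2⟩ | ⟨h1, h2⟩
  · exact hb (h2 ▸ hfS)
  · exact hb (h1 ▸ hvS)

lemma comp_measure_le (n : ℕ) (q : ℝ) (hq0 : 0 ≤ q) (hq1 : q ≤ 1)
    (S : Finset (Fin n)) (hS : S.Nonempty) :
    gnpMeasure n q (compEvent n S)
      ≤ (S.card : ENNReal) ^ (S.card - 1) *
        ((ENNReal.ofReal q) ^ (S.card - 1) *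
          (ENNReal.ofReal (1 - q)) ^ (S.card * (n - S.card))) := by
  classical
  obtain ⟨r, hr⟩ := hS
  set Φ : Finset ({x // x ∈ S.erase r} → {x // x ∈ S}) :=
    Finset.univ.filter (fun f =>
      (∀ v : {x // x ∈ S.erase r}, (v : Fin n) ≠ ((f v) : Fin n)) ∧
      Function.Injective
        (fun v : {x // x ∈ S.erase r} => s((v : Fin n), ((f v) : Fin n)))) with hΦ
  have hcover : compEvent n S ⊆ ⋃ f ∈ Φ, Ev (treeE S r f) (crossE S) := by
    intro ω hω
    set G := gnpGraph ω with hG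
    obtain ⟨c, hc⟩ := hω
    have hmem : ∀ a : Fin n, a ∈ S ↔ G.connectedComponentMk a = c := by
      intro a
      rw [← SimpleGraph.ConnectedComponent.mem_supp_iff, ← hc, Finset.mem_coe]
    have key : ∀ v : {x // x ∈ S.erase r},
        ∃ u, G.Adj (v : Fin n) u ∧ G.dist u r < G.dist (v : Fin n) r := by
      intro v
      obtain ⟨hvr, hvS⟩ := Finset.mem_erase.1 v.2
      have h1 : G.connectedComponentMk (v : Fin n) = c := (hmem _).1 hvS
      have h2 : G.connectedComponentMk r = c := (hmem _).1 hr
      have hreach : G.Reachable (v : Fin n) r :=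
        SimpleGraph.ConnectedComponent.exact (h1.trans h2.symm)
      exact exists_adj_dist_lt G hreach hvr
    choose g hg1 hg2 using key
    have hgS : ∀ v, g v ∈ S := by
      intro v
      have h1 : G.connectedComponentMk (g v) = G.connectedComponentMk (v : Fin n) :=
        SimpleGraph.ConnectedComponent.sound ((hg1 v).symm.reachable)
      exact (hmem _).2 (h1.trans ((hmem _).1 (Finset.mem_of_mem_erase v.2)))
    set f : {x // x ∈ S.erase r} → {x // x ∈ S} := fun v => ⟨g v, hgS v⟩ with hf
    have hfΦ : f ∈ Φ := by
      rw [hΦ, Finset.mem_filter]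
      refine ⟨Finset.mem_univ _, fun v => (G.ne_of_adj (hg1 v)), ?_⟩
      intro v w h
      simp only at h
      rcases Sym2.eq_iff.1 h with ⟨h1, h2⟩ | ⟨h1, h2⟩
      · exact Subtype.ext h1
      · exfalso
        have d1 := hg2 v
        have d2 := hg2 w
        rw [show g v = ↑w from h2] at d1
        rw [← (show (v : Fin n) = g w from h1)] at d2
        omega
    refine Set.mem_biUnion hfΦ ⟨?_, ?_⟩
    · intro e he
      simp only [treeE, Finset.mem_filter, Finset.mem_univ, true_and] at he
      obtain ⟨v, hv⟩ := he
      have hadj := hg1 v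
      rw [gnpGraph_adj] at hadj
      obtain ⟨⟨hd, hw⟩, -⟩ := hadj
      have : e = ⟨s((v : Fin n), g v), hd⟩ := Subtype.ext hv
      rw [this]
      exact hw
    · intro e he
      simp only [crossE, Finset.mem_filter, Finset.mem_univ, true_and] at he
      obtain ⟨a, ha, b, hb, hab⟩ := he
      by_contra hcon
      rw [Bool.not_eq_false] at hcon
      have hne : a ≠ b := fun h => hb (h ▸ ha)
      have hadj : G.Adj a b := by
        rw [hG, gnpGraph_adj]
        refine ⟨⟨hab ▸ e.2, ?_⟩, hne⟩
        have : (⟨s(a, b), hab ▸ e.2⟩ : EdgeIdx n) = e := (Subtype.ext hab).symm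
        rw [this]
        exact hcon
      have : b ∈ S := by
        refine (hmem b).2 ?_
        have h1 : G.connectedComponentMk b = G.connectedComponentMk a :=
          SimpleGraph.ConnectedComponent.sound (hadj.symm.reachable)
        exact h1.trans ((hmem a).1 ha)
      exact hb this
  calc gnpMeasure n q (compEvent n S)
      ≤ gnpMeasure n q (⋃ f ∈ Φ, Ev (treeE S r f) (crossE S)) := measure_mono hcover
    _ ≤ ∑ f ∈ Φ, gnpMeasure n q (Ev (treeE S r f) (crossE S)) :=
        measure_biUnion_finset_le Φ _
    _ ≤ ∑ _f ∈ Φ, (ENNReal.ofReal q) ^ (S.card - 1) *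
          (ENNReal.ofReal (1 - q)) ^ (S.card * (n - S.card)) := by
        refine Finset.sum_le_sum fun f hf => ?_
        rw [hΦ, Finset.mem_filter] at hf
        obtain ⟨-, hne, hinj⟩ := hf
        rw [gnp_cylinder n q hq0 hq1 _ _ (treeE_disjoint_crossE S r f),
          card_treeE S r hr f hne hinj, card_crossE S]
    _ = (Φ.card : ENNReal) * ((ENNReal.ofReal q) ^ (S.card - 1) *
          (ENNReal.ofReal (1 - q)) ^ (S.card * (n - S.card))) := by
        rw [Finset.sum_const, nsmul_eq_mul]
    _ ≤ (S.card : ENNReal) ^ (S.card - 1) * ((ENNReal.ofReal q) ^ (S.card - 1) *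
          (ENNReal.ofReal (1 - q)) ^ (S.card * (n - S.card))) := by
        refine mul_le_mul_left ?_ _
        have h1 : Φ.card ≤ S.card ^ (S.card - 1) := by
          calc Φ.card ≤ (Finset.univ : Finset ({x // x ∈ S.erase r} → {x // x ∈ S})).card :=
                Finset.card_le_card (Finset.filter_subset _ _)
            _ = S.card ^ (S.card - 1) := by
                rw [Finset.card_univ, Fintype.card_fun, Fintype.card_coe, Fintype.card_coe,
                  Finset.card_erase_of_mem hr]
        calc (Φ.card : ENNReal) ≤ ((S.card ^ (S.card - 1) : ℕ) : ENNReal) := Nat.cast_le.2 h1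
          _ = (S.card : ENNReal) ^ (S.card - 1) := by push_cast; rfl

def SS (n : ℕ) : Finset (Finset (Fin n)) :=
  (Finset.Icc 1 (n / 2)).biUnion (fun k => Finset.powersetCard k Finset.univ)

open Classical in
lemma kappa_le_count (n : ℕ) (hn : 2 ≤ n) (ω : EdgeIdx n → Bool) :
    kappa ω ≤ 1 + ((SS n).filter (fun S => ω ∈ compEvent n S)).card := by
  classical
  cases nonempty_fintype (gnpGraph ω).ConnectedComponent
  have hk : kappa ω = Fintype.card (gnpGraph ω).ConnectedComponent :=
    Nat.card_eq_fintype_card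
  set p : (gnpGraph ω).ConnectedComponent → Prop :=
    fun c => (n / 2) < (c.supp.toFinset).card with hp
  have hdisj : ∀ (a b : (gnpGraph ω).ConnectedComponent), a ≠ b →
      Disjoint a.supp.toFinset b.supp.toFinset := by
    intro a b hab
    rw [Finset.disjoint_left]
    intro v hva hvb
    rw [Set.mem_toFinset, SimpleGraph.ConnectedComponent.mem_supp_iff] at hva hvb
    exact hab (hva ▸ hvb)
  have hne : ∀ c : (gnpGraph ω).ConnectedComponent, c.supp.toFinset.Nonempty := by
    intro c
    obtain ⟨v, hv⟩ := c.exists_rep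
    exact ⟨v, Set.mem_toFinset.2 (by rwa [SimpleGraph.ConnectedComponent.mem_supp_iff])⟩
  have hsplit := Finset.card_filter_add_card_filter_not (s := (Finset.univ : Finset (gnpGraph ω).ConnectedComponent)) p
  have huniv : (Finset.univ : Finset (gnpGraph ω).ConnectedComponent).card
      = Fintype.card (gnpGraph ω).ConnectedComponent := Finset.card_univ
  have hbig : (Finset.univ.filter p).card ≤ 1 := by
    rw [Finset.card_le_one]
    intro a ha b hb
    by_contra hab
    have hd := hdisj a b hab
    have hcu : (a.supp.toFinset ∪ b.supp.toFinset).card ≤ n := by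
      calc (a.supp.toFinset ∪ b.supp.toFinset).card ≤ (Finset.univ : Finset (Fin n)).card :=
            Finset.card_le_card (Finset.subset_univ _)
        _ = n := by rw [Finset.card_univ, Fintype.card_fin]
    rw [Finset.card_union_of_disjoint hd] at hcu
    rw [Finset.mem_filter, hp] at ha hb
    have h1 := ha.2
    have h2 := hb.2
    omega
  have hsmall : (Finset.univ.filter (fun c => ¬ p c)).card
      ≤ ((SS n).filter (fun S => ω ∈ compEvent n S)).card := by
    refine Finset.card_le_card_of_injOn (fun c => c.supp.toFinset) ?_ ?_
    · intro c hc
      rw [Finset.mem_coe, Finset.mem_filter, hp] at hc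
      rw [Finset.mem_coe, Finset.mem_filter]
      constructor
      · rw [SS, Finset.mem_biUnion]
        refine ⟨c.supp.toFinset.card, ?_, Finset.mem_powersetCard_univ.2 rfl⟩
        rw [Finset.mem_Icc]
        exact ⟨Finset.card_pos.2 (hne c), by omega⟩
      · exact ⟨c, Set.coe_toFinset _⟩
    · intro a _ b _ h
      exact SimpleGraph.ConnectedComponent.supp_injective (Set.toFinset_inj.1 h)
  omega

lemma one_le_expKappa (n : ℕ) (hn : 2 ≤ n) (q : ℝ) : 1 ≤ expKappa n q := by
  have h0 : (1:ℝ) = ∫ _ω, (1:ℝ) ∂(gnpMeasure n q) := by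
    rw [integral_const, probReal_univ, one_smul]
  rw [h0]
  refine integral_mono (Integrable.of_finite) (Integrable.of_finite) ?_
  intro ω
  haveI : Nonempty (gnpGraph ω).ConnectedComponent :=
    ⟨SimpleGraph.connectedComponentMk _ ⟨0, by omega⟩⟩
  show (1:ℝ) ≤ (kappa ω : ℝ)
  exact_mod_cast Nat.one_le_iff_ne_zero.2 Nat.card_pos.ne'

open Classical in
lemma expKappa_le (n : ℕ) (hn : 2 ≤ n) (q : ℝ) (hq0 : 0 ≤ q) (hq1 : q ≤ 1) :
    expKappa n q ≤ 1 + ∑ k ∈ Finset.Icc 1 (n / 2),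
      (n.choose k : ℝ) * ((k : ℝ) ^ (k - 1) * (q ^ (k - 1) * (1 - q) ^ (k * (n - k)))) := by
  have h1 : expKappa n q ≤ ∫ ω, (1 + ∑ S ∈ SS n,
      Set.indicator (compEvent n S) (fun _ => (1:ℝ)) ω) ∂(gnpMeasure n q) := by
    refine integral_mono (Integrable.of_finite) (Integrable.of_finite) ?_
    intro ω
    have hc := kappa_le_count n hn ω
    have hsum : ∑ S ∈ SS n, Set.indicator (compEvent n S) (fun _ => (1:ℝ)) ω
        = (((SS n).filter (fun S => ω ∈ compEvent n S)).card : ℝ) := by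
      rw [← Finset.sum_boole]
      exact Finset.sum_congr rfl fun S _ => Set.indicator_apply _ _ _
    show (kappa ω : ℝ) ≤ 1 + ∑ S ∈ SS n, Set.indicator (compEvent n S) (fun _ => (1:ℝ)) ω
    rw [hsum]
    calc (kappa ω : ℝ) ≤ ((1 + ((SS n).filter (fun S => ω ∈ compEvent n S)).card : ℕ) : ℝ) :=
          Nat.cast_le.2 hc
      _ = 1 + (((SS n).filter (fun S => ω ∈ compEvent n S)).card : ℝ) := by push_cast; ring
  have h2 : ∫ ω, (1 + ∑ S ∈ SS n,
      Set.indicator (compEvent n S) (fun _ => (1:ℝ)) ω) ∂(gnpMeasure n q)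
      = 1 + ∑ S ∈ SS n, (gnpMeasure n q (compEvent n S)).toReal := by
    rw [integral_add (Integrable.of_finite) (Integrable.of_finite), integral_const,
      probReal_univ, one_smul,
      integral_finset_sum _ (fun S _ => Integrable.of_finite)]
    congr 1
    refine Finset.sum_congr rfl fun S _ => ?_
    rw [integral_indicator_const (1:ℝ) (measurableSet_all _), smul_eq_mul, mul_one]; rfl
  have h3 : ∀ S ∈ SS n, (gnpMeasure n q (compEvent n S)).toReal
      ≤ (S.card : ℝ) ^ (S.card - 1) * (q ^ (S.card - 1) * (1 - q) ^ (S.card * (n - S.card))) := by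
    intro S hS
    have hSne : S.Nonempty := by
      rw [SS, Finset.mem_biUnion] at hS
      obtain ⟨k, hk, hSk⟩ := hS
      rw [Finset.mem_powersetCard_univ] at hSk
      rw [Finset.mem_Icc] at hk
      exact Finset.card_pos.1 (by omega)
    have hb := comp_measure_le n q hq0 hq1 S hSne
    have hfin : ((S.card : ENNReal) ^ (S.card - 1) *
        ((ENNReal.ofReal q) ^ (S.card - 1) *
          (ENNReal.ofReal (1 - q)) ^ (S.card * (n - S.card)))) ≠ ⊤ := by
      refine ENNReal.mul_ne_top (ENNReal.pow_ne_top (ENNReal.natCast_ne_top _))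
        (ENNReal.mul_ne_top (ENNReal.pow_ne_top ENNReal.ofReal_ne_top)
          (ENNReal.pow_ne_top ENNReal.ofReal_ne_top))
    have := ENNReal.toReal_mono hfin hb
    rwa [ENNReal.toReal_mul, ENNReal.toReal_mul, ENNReal.toReal_pow, ENNReal.toReal_pow,
      ENNReal.toReal_pow, ENNReal.toReal_natCast, ENNReal.toReal_ofReal hq0,
      ENNReal.toReal_ofReal (by linarith : (0:ℝ) ≤ 1 - q)] at this
  have h4 : ∑ S ∈ SS n, ((S.card : ℝ) ^ (S.card - 1) *
        (q ^ (S.card - 1) * (1 - q) ^ (S.card * (n - S.card))))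
      = ∑ k ∈ Finset.Icc 1 (n / 2),
        (n.choose k : ℝ) * ((k : ℝ) ^ (k - 1) * (q ^ (k - 1) * (1 - q) ^ (k * (n - k)))) := by
    rw [SS, Finset.sum_biUnion]
    · refine Finset.sum_congr rfl fun k _ => ?_
      have : ∀ S ∈ Finset.powersetCard k (Finset.univ : Finset (Fin n)),
          ((S.card : ℝ) ^ (S.card - 1) * (q ^ (S.card - 1) * (1 - q) ^ (S.card * (n - S.card))))
            = (k : ℝ) ^ (k - 1) * (q ^ (k - 1) * (1 - q) ^ (k * (n - k))) := by
        intro S hSk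
        rw [Finset.mem_powersetCard_univ] at hSk
        rw [hSk]
      rw [Finset.sum_congr rfl this, Finset.sum_const, Finset.card_powersetCard,
        Finset.card_univ, Fintype.card_fin, nsmul_eq_mul]
    · intro a ha b hb hab
      refine Finset.disjoint_left.2 fun S hSa hSb => ?_
      simp only [Finset.mem_powersetCard_univ] at hSa hSb
      exact hab (hSa ▸ hSb)
  calc expKappa n q ≤ _ := h1
    _ = _ := h2
    _ ≤ 1 + ∑ S ∈ SS n, ((S.card : ℝ) ^ (S.card - 1) *
          (q ^ (S.card - 1) * (1 - q) ^ (S.card * (n - S.card)))) := by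
        refine add_le_add_right (Finset.sum_le_sum h3) _
    _ = _ := by rw [h4]

lemma expKappa_le_compBound (n : ℕ) (hn : 2 ≤ n) (q : ℝ) (hq0 : 0 ≤ q) (hq1 : q ≤ 1) :
    expKappa n q ≤ compBound n q := by
  refine (expKappa_le n hn q hq0 hq1).trans ?_
  rw [compBound, Finset.mul_sum]
  refine add_le_add_right (Finset.sum_le_sum fun k hk => ?_) 1
  rw [Finset.mem_Icc] at hk
  have hkn : k ≤ n := hk.2.trans (Nat.div_le_self n 2)
  have hnat : k ^ (k - 1) ≤ n * k ^ (k - 2) := by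
    rcases Nat.lt_or_ge k 2 with h | h
    · have : k = 1 := by omega
      subst this
      simpa using (by omega : 1 ≤ n)
    · have h1 : k - 1 = (k - 2) + 1 := by omega
      rw [h1, pow_succ]
      calc k ^ (k - 2) * k ≤ k ^ (k - 2) * n := Nat.mul_le_mul_left _ hkn
        _ = n * k ^ (k - 2) := Nat.mul_comm _ _
  have hreal : (k : ℝ) ^ (k - 1) ≤ (n : ℝ) * (k : ℝ) ^ (k - 2) := by exact_mod_cast hnat
  have hX : (0:ℝ) ≤ q ^ (k - 1) * (1 - q) ^ (k * (n - k)) :=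
    mul_nonneg (pow_nonneg hq0 _) (pow_nonneg (by linarith) _)
  calc (n.choose k : ℝ) * ((k : ℝ) ^ (k - 1) * (q ^ (k - 1) * (1 - q) ^ (k * (n - k))))
      ≤ (n.choose k : ℝ) * (((n : ℝ) * (k : ℝ) ^ (k - 2)) * (q ^ (k - 1) * (1 - q) ^ (k * (n - k)))) := by
        refine mul_le_mul_of_nonneg_left (mul_le_mul_of_nonneg_right hreal hX) (Nat.cast_nonneg _)
    _ = (n : ℝ) * ((n.choose k : ℝ) * (k : ℝ) ^ (k - 2) * q ^ (k - 1) * (1 - q) ^ (k * (n - k))) := by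
        ring

lemma part2 (n : ℕ) (hn : 16000000 ≤ n) (q : ℝ)
    (hql : 1000 * Real.log n / n ≤ q) (hq1 : q ≤ 1) :
    compBound n q ≤ 1 + (n : ℝ) ^ 3 * Real.exp 1 * (n : ℝ) ^ (-(499 : ℝ)) /
      (1000 * Real.log n) := by
  have hn2 : (2:ℝ) ≤ (n:ℝ) := by exact_mod_cast (by omega : 2 ≤ n)
  have hnpos : (0:ℝ) < n := by linarith
  have hlogpos : (0:ℝ) < Real.log n := Real.log_pos (by linarith)
  have hq0 : 0 ≤ q := le_trans (by positivity) hql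
  have h1q : (0:ℝ) ≤ 1 - q := by linarith
  set r : ℝ := ((n:ℝ) ^ 498)⁻¹ with hr
  have hrpos : 0 < r := by positivity
  have hrhalf : r ≤ 1/2 := by
    rw [hr]
    rw [inv_le_comm₀ (by positivity) (by norm_num)]
    calc (1/2 : ℝ)⁻¹ = 2 := by norm_num
      _ ≤ (n:ℝ) := hn2
      _ ≤ (n:ℝ) ^ 498 := le_self_pow₀ (by linarith) (by norm_num)
  -- termwise bound
  have hterm : ∀ k ∈ Finset.Icc 1 (n / 2),
      (n.choose k : ℝ) * (k : ℝ) ^ (k - 2) * q ^ (k - 1) * (1 - q) ^ (k * (n - k)) ≤ r ^ k := by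
    intro k hk
    rw [Finset.mem_Icc] at hk
    obtain ⟨hk1, hk2⟩ := hk
    have hkn : k ≤ n := hk2.trans (Nat.div_le_self n 2)
    have hc : (n.choose k : ℝ) ≤ (n:ℝ) ^ k := by exact_mod_cast Nat.choose_le_pow n k
    have hkk : (k : ℝ) ^ (k - 2) ≤ (n:ℝ) ^ k :=
      le_trans (pow_le_pow_left₀ (Nat.cast_nonneg k) (by exact_mod_cast hkn) _)
        (pow_le_pow_right₀ (by linarith) (by omega))
    have hqp : q ^ (k - 1) ≤ 1 := pow_le_one₀ hq0 hq1
    set m : ℕ := k * (n - k) with hm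
    have hmge : (k:ℝ) * ((n:ℝ)/2) ≤ (m:ℝ) := by
      rw [hm]
      push_cast [Nat.cast_sub hkn]
      have hkhalf : (k:ℝ) ≤ (n:ℝ)/2 := by
        calc (k:ℝ) ≤ ((n/2 : ℕ) : ℝ) := by exact_mod_cast hk2
          _ ≤ (n:ℝ)/2 := Nat.cast_div_le
      have : (n:ℝ)/2 ≤ (n:ℝ) - k := by linarith
      have hk0 : (0:ℝ) ≤ k := Nat.cast_nonneg k
      nlinarith
    have hpow : (1 - q) ^ m ≤ ((n:ℝ) ^ (500 * k))⁻¹ := by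
      have e1 : (1 - q) ^ m ≤ Real.exp (-q) ^ m :=
        pow_le_pow_left₀ h1q (by linarith [Real.add_one_le_exp (-q)]) m
      have e2 : Real.exp (-q) ^ m = Real.exp ((m:ℝ) * (-q)) := (Real.exp_nat_mul _ m).symm
      have e3 : (m:ℝ) * (-q) ≤ -(500 * k * Real.log n) := by
        have h500 : 500 * (k:ℝ) * Real.log n ≤ (m:ℝ) * q := by
          calc 500 * (k:ℝ) * Real.log n
              = ((k:ℝ) * ((n:ℝ)/2)) * (1000 * Real.log n / n) := by
                field_simp
                ring
            _ ≤ (m:ℝ) * q :=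
                mul_le_mul hmge hql (by positivity) (Nat.cast_nonneg m)
        linarith
      have e4 : Real.exp (-(500 * (k:ℝ) * Real.log n)) = ((n:ℝ) ^ (500 * k))⁻¹ := by
        rw [Real.exp_neg]
        congr 1
        rw [show (500 : ℝ) * (k:ℝ) * Real.log n = ((500 * k : ℕ):ℝ) * Real.log n by
          push_cast; ring, Real.exp_nat_mul, Real.exp_log hnpos]
      calc (1 - q) ^ m ≤ Real.exp (-q) ^ m := e1
        _ = Real.exp ((m:ℝ) * (-q)) := e2
        _ ≤ Real.exp (-(500 * (k:ℝ) * Real.log n)) := Real.exp_le_exp.2 e3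
        _ = ((n:ℝ) ^ (500 * k))⁻¹ := e4
    have hprod : (n.choose k : ℝ) * (k:ℝ) ^ (k-2) * q ^ (k-1) * (1 - q) ^ m
        ≤ (n:ℝ) ^ k * (n:ℝ) ^ k * 1 * ((n:ℝ) ^ (500 * k))⁻¹ := by
      refine mul_le_mul (mul_le_mul (mul_le_mul hc hkk
        (pow_nonneg (Nat.cast_nonneg k) _) (by positivity)) hqp
        (pow_nonneg hq0 _) (by positivity)) hpow (pow_nonneg h1q _) (by positivity)
    have heq : (n:ℝ) ^ k * (n:ℝ) ^ k * 1 * ((n:ℝ) ^ (500 * k))⁻¹ = r ^ k := by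
      rw [hr, inv_pow, ← pow_mul, mul_one, ← pow_add]
      rw [show 500 * k = (k + k) + 498 * k from by omega]
      have hne : ((n:ℝ) ^ (498 * k)) ≠ 0 := by positivity
      field_simp
      rw [← pow_add]
    exact le_of_le_of_eq hprod heq
  have hsum : ∑ k ∈ Finset.Icc 1 (n / 2), r ^ k ≤ 2 * r := by
    have h1 : Finset.Icc 1 (n / 2) = Finset.Ico 1 (n / 2 + 1) := (Finset.Ico_add_one_right_eq_Icc _ _).symm
    rw [h1, Finset.sum_Ico_eq_sum_range]
    have h2 : ∀ j ∈ Finset.range (n / 2 + 1 - 1), r ^ (1 + j) ≤ r * (1/2 : ℝ) ^ j := by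
      intro j _
      rw [pow_add, pow_one]
      exact mul_le_mul_of_nonneg_left (pow_le_pow_left₀ hrpos.le hrhalf j) hrpos.le
    refine le_trans (Finset.sum_le_sum h2) ?_
    rw [← Finset.mul_sum]
    calc r * ∑ j ∈ Finset.range (n / 2 + 1 - 1), (1/2 : ℝ) ^ j
        ≤ r * 2 := mul_le_mul_of_nonneg_left (sum_geometric_two_le _) hrpos.le
      _ = 2 * r := mul_comm _ _
  rw [compBound]
  refine add_le_add_right ?_ 1
  refine le_trans (mul_le_mul_of_nonneg_left
    (le_trans (Finset.sum_le_sum hterm) hsum) (Nat.cast_nonneg n)) ?_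
  have hrpow : (n:ℝ) ^ (-(499:ℝ)) = ((n:ℝ) ^ (499:ℕ))⁻¹ := by
    rw [← Real.rpow_natCast (n:ℝ) 499, ← Real.rpow_neg hnpos.le]
    norm_num
  rw [hrpow, hr]
  have hkey : 2000 * Real.log n ≤ Real.exp 1 * n := by
    have hs1 : Real.log (Real.sqrt n) = Real.log n / 2 := Real.log_sqrt hnpos.le
    have hs2 : Real.log (Real.sqrt n) ≤ Real.sqrt n - 1 :=
      Real.log_le_sub_one_of_pos (Real.sqrt_pos.2 hnpos)
    have h4000 : (4000:ℝ) ≤ Real.sqrt n := by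
      have h1 : Real.sqrt ((4000:ℝ)^2) ≤ Real.sqrt n := by
        refine Real.sqrt_le_sqrt ?_
        calc ((4000:ℝ))^2 = ((16000000:ℕ):ℝ) := by norm_num
          _ ≤ (n:ℝ) := by exact_mod_cast hn
      rwa [Real.sqrt_sq (by norm_num)] at h1
    have hsq : Real.sqrt n * Real.sqrt n = n := Real.mul_self_sqrt hnpos.le
    have he : (1:ℝ) ≤ Real.exp 1 := by linarith [Real.add_one_le_exp 1]
    nlinarith [Real.sqrt_nonneg (n:ℝ),
      mul_nonneg (sub_nonneg.2 h4000) (Real.sqrt_nonneg (n:ℝ))]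
  have hn496 : (0:ℝ) < (n:ℝ)^496 := by positivity
  calc (n:ℝ) * (2 * ((n:ℝ)^498)⁻¹) = 2 / (n:ℝ)^497 := by
        rw [show (n:ℝ)^498 = (n:ℝ)^497 * n from by ring]
        field_simp
    _ ≤ Real.exp 1 / ((n:ℝ)^496 * (1000 * Real.log n)) := by
        rw [div_le_div_iff₀ (by positivity) (by positivity)]
        calc 2 * ((n:ℝ)^496 * (1000 * Real.log n))
            = (n:ℝ)^496 * (2000 * Real.log n) := by ring
          _ ≤ (n:ℝ)^496 * (Real.exp 1 * n) := mul_le_mul_of_nonneg_left hkey hn496.le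
          _ = Real.exp 1 * (n:ℝ)^497 := by ring
    _ = (n:ℝ)^3 * Real.exp 1 * ((n:ℝ)^(499:ℕ))⁻¹ / (1000 * Real.log n) := by
        rw [show ((n:ℝ)^(499:ℕ)) = (n:ℝ)^3 * (n:ℝ)^496 from by ring]
        field_simp

end Stmt19

theorem stmt_19 :
    (∀ n : ℕ, 2 ≤ n → ∀ q : ℝ, q ∈ Set.Icc (1000 * Real.log n / n) 1 →
       1 ≤ expKappa n q ∧ expKappa n q ≤ compBound n q) ∧
    (∃ N : ℕ, ∀ n : ℕ, N ≤ n → ∀ q : ℝ, q ∈ Set.Icc (1000 * Real.log n / n) 1 →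
       compBound n q ≤ 1 + (n : ℝ) ^ 3 * Real.exp 1 * (n : ℝ) ^ (-(499 : ℝ)) /
         (1000 * Real.log n)) := by
  constructor
  · intro n hn q hq
    obtain ⟨hql, hq1⟩ := hq
    have h1n : (1:ℝ) ≤ (n:ℝ) := by exact_mod_cast (by omega : 1 ≤ n)
    have hlog : (0:ℝ) ≤ Real.log n := Real.log_nonneg h1n
    have hq0 : 0 ≤ q := le_trans (by positivity) hql
    exact ⟨Stmt19.one_le_expKappa n hn q, Stmt19.expKappa_le_compBound n hn q hq0 hq1⟩
  · exact ⟨16000000, fun n hn q hq => Stmt19.part2 n hn q hq.1 hq.2⟩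
end
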